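/- Let α>1 and β>0, and for a<b define m^{a,b}_f = (1/(b−a)) ∫_a^b f(x) dx. Then |∫_a^b (R_{α,β}(x) − sin(π x)) dx| ≤ (2/π)(ζ(α+β) − 1), and consequently m^{a,b}_{R_{α,β}} → m^{a,b}_{sin(π·)} as β → ∞. -/

import Mathlib

open Real Filter Topology intervalIntegral

noncomputable def R (α β x : ℝ) : ℝ :=
  ∑' n : ℕ, Real.sin (Real.pi * ((n : ℝ) + 1) ^ β * x) / ((n : ℝ) + 1) ^ α

open MeasureTheory in
lemma aux_summable {α : ℝ} (hα : 1 < α) : Summable (fun n : ℕ => 1/((n:ℝ)+1)^α) := by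
  have h := (summable_nat_add_iff (f := fun n : ℕ => 1/(n:ℝ)^α) 1).mpr
    (Real.summable_one_div_nat_rpow.mpr hα)
  simpa using h

lemma aux_bound (α β x : ℝ) (n : ℕ) :
    ‖Real.sin (Real.pi * ((n : ℝ) + 1) ^ β * x) / ((n : ℝ) + 1) ^ α‖ ≤ 1/((n:ℝ)+1)^α := by
  have hpos : (0:ℝ) < ((n:ℝ)+1)^α := Real.rpow_pos_of_pos (by positivity) _
  rw [norm_div, Real.norm_eq_abs, Real.norm_eq_abs, abs_of_pos hpos]
  gcongr
  exact Real.abs_sin_le_one _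

lemma aux_cont (α β : ℝ) (hα : 1 < α) : Continuous (R α β) := by
  apply continuous_tsum (u := fun n : ℕ => 1/((n:ℝ)+1)^α)
  · intro i; exact (Real.continuous_sin.comp (by continuity)).div_const _
  · exact aux_summable hα
  · exact fun n x => aux_bound α β x n

lemma aux_term_bound (a b : ℝ) (hab : a ≤ b) {c A : ℝ} (hc : 0 < c) (hA : 0 < A) :
    |∫ x in a..b, Real.sin (c * x) / A| ≤ 2 / (c * A) := by
  rw [intervalIntegral.integral_div,
    intervalIntegral.integral_comp_mul_left (fun x => Real.sin x) hc.ne', integral_sin]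
  rw [smul_eq_mul, abs_div, abs_of_pos hA, abs_mul, abs_of_pos (inv_pos.mpr hc)]
  rw [div_le_div_iff₀ (by positivity) (by positivity)]
  have h2 : |Real.cos (c*a) - Real.cos (c*b)| ≤ 2 := by
    calc |Real.cos (c*a) - Real.cos (c*b)| ≤ |Real.cos (c*a)| + |Real.cos (c*b)| := abs_sub _ _
    _ ≤ 1 + 1 := add_le_add (Real.abs_cos_le_one _) (Real.abs_cos_le_one _)
    _ = 2 := by norm_num
  calc c⁻¹ * |Real.cos (c*a) - Real.cos (c*b)| * (c * A)
      = |Real.cos (c*a) - Real.cos (c*b)| * A := by field_simp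
  _ ≤ 2 * A := by gcongr

open MeasureTheory in
lemma aux_interchange (α β a b : ℝ) (hα : 1 < α) (hab : a ≤ b) :
    ∫ x in a..b, R α β x =
      ∑' n : ℕ, ∫ x in a..b, Real.sin (Real.pi * ((n : ℝ) + 1) ^ β * x) / ((n : ℝ) + 1) ^ α := by
  set F : ℕ → ℝ → ℝ := fun n x => Real.sin (Real.pi * ((n : ℝ) + 1) ^ β * x) / ((n : ℝ) + 1) ^ α
  have hFcont : ∀ n, Continuous (F n) := by
    intro n; exact (Real.continuous_sin.comp (by continuity)).div_const _
  have hFint : ∀ n, Integrable (F n) (MeasureTheory.volume.restrict (Set.Ioc a b)) :=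
    fun n => (hFcont n).integrableOn_Ioc
  have hnorm : ∀ n, (∫ x in Set.Ioc a b, ‖F n x‖) ≤ (b - a) * (1/((n:ℝ)+1)^α) := by
    intro n
    calc (∫ x in Set.Ioc a b, ‖F n x‖)
        ≤ ∫ _x in Set.Ioc a b, (1/((n:ℝ)+1)^α) := by
          apply MeasureTheory.setIntegral_mono_on (hFint n).norm
            (integrableOn_const (by simp [Real.volume_Ioc]))
            measurableSet_Ioc
          exact fun x _ => aux_bound α β x n
      _ = (b - a) * (1/((n:ℝ)+1)^α) := by
          rw [MeasureTheory.setIntegral_const, Real.volume_real_Ioc_of_le hab,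
            smul_eq_mul]
  have hsum : Summable (fun n => ∫ x in Set.Ioc a b, ‖F n x‖) := by
    apply Summable.of_nonneg_of_le
      (fun n => MeasureTheory.integral_nonneg (fun x => norm_nonneg _)) hnorm
    exact (aux_summable hα).mul_left _
  have h := (MeasureTheory.hasSum_integral_of_summable_integral_norm hFint hsum).tsum_eq
  simp only [intervalIntegral.integral_of_le hab]
  exact h.symm

lemma aux_zeta_re (s : ℝ) (hs : 1 < s) :
    (riemannZeta s).re - 1 = ∑' n : ℕ, 1/((n:ℝ)+2)^s := by
  have hsR : (1:ℝ) < ((s:ℂ)).re := by simpa using hs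
  have hsum : Summable (fun n : ℕ => 1/(n:ℝ)^s) := Real.summable_one_div_nat_rpow.mpr hs
  have hC : Summable (fun n : ℕ => 1/(n:ℂ)^(s:ℂ)) := Complex.summable_one_div_nat_cpow.mpr hsR
  rw [zeta_eq_tsum_one_div_nat_cpow hsR, Complex.re_tsum hC]
  have hterm : ∀ n : ℕ, ((1:ℂ)/(n:ℂ)^(s:ℂ)).re = 1/(n:ℝ)^s := by
    intro n
    rw [show ((n:ℂ)) = (((n:ℝ)):ℂ) by push_cast; ring, ← Complex.ofReal_cpow (Nat.cast_nonneg n),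
      ← Complex.ofReal_one, ← Complex.ofReal_div, Complex.ofReal_re]
  rw [tsum_congr hterm, Summable.tsum_eq_zero_add hsum]
  have hsum1 : Summable (fun n : ℕ => 1/((n:ℝ)+1)^s) := by
    have h := (summable_nat_add_iff (f := fun n : ℕ => 1/(n:ℝ)^s) 1).mpr hsum
    simpa using h
  have : (∑' n : ℕ, 1/((n:ℕ)+1:ℝ)^s) = 1 + ∑' n : ℕ, 1/((n:ℝ)+2)^s := by
    have h2 := Summable.tsum_eq_zero_add hsum1
    simp only [Nat.cast_zero, zero_add, Real.one_rpow, div_one] at h2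
    rw [show (fun n : ℕ => 1/((n:ℕ)+1:ℝ)^s) = (fun n : ℕ => 1/((n:ℝ)+1)^s) by rfl] at *
    rw [h2]
    congr 1
    apply tsum_congr; intro n; push_cast; ring_nf
  push_cast
  rw [this]
  simp [Real.zero_rpow (by linarith : s ≠ 0)]

theorem stmt_9 (α : ℝ) (hα : 1 < α) (a b : ℝ) (hab : a < b) :
    (∀ β > (0 : ℝ),
      |∫ x in a..b, (R α β x - Real.sin (Real.pi * x))| ≤
        (2 / Real.pi) * ((riemannZeta (α + β)).re - 1)) ∧
    Tendsto (fun β : ℝ => (1 / (b - a)) * ∫ x in a..b, R α β x)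
      atTop (𝓝 ((1 / (b - a)) * ∫ x in a..b, Real.sin (Real.pi * x))) := by
  have hπ : (0:ℝ) < Real.pi := Real.pi_pos
  -- Part 1
  have hsin : Continuous (fun x : ℝ => Real.sin (Real.pi * x)) :=
    Real.continuous_sin.comp (continuous_const.mul continuous_id)
  have part1 : ∀ β > (0 : ℝ),
      |∫ x in a..b, (R α β x - Real.sin (Real.pi * x))| ≤
        (2 / Real.pi) * ((riemannZeta (α + β)).re - 1) := by
    intro β hβ
    rw [← Complex.ofReal_add]
    have hs : 1 < α + β := by linarith
    set s := α + β with hs_def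
    set I : ℕ → ℝ := fun n => ∫ x in a..b,
      Real.sin (Real.pi * ((n : ℝ) + 1) ^ β * x) / ((n : ℝ) + 1) ^ α with hI_def
    have hIb : ∀ n : ℕ, |I n| ≤ 2/(Real.pi * ((n:ℝ)+1)^s) := by
      intro n
      have hn1 : (0:ℝ) < (n:ℝ)+1 := by positivity
      have hc : (0:ℝ) < Real.pi * ((n:ℝ)+1)^β := by
        exact mul_pos hπ (Real.rpow_pos_of_pos hn1 _)
      have hA : (0:ℝ) < ((n:ℝ)+1)^α := Real.rpow_pos_of_pos hn1 _
      have heq : Real.pi * ((n:ℝ)+1)^β * (((n:ℝ)+1)^α) = Real.pi * ((n:ℝ)+1)^s := by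
        rw [hs_def, Real.rpow_add hn1]; ring
      have h := aux_term_bound a b hab.le hc hA
      rw [heq] at h
      exact h
    have hGsum : Summable (fun n : ℕ => 2/(Real.pi * ((n:ℝ)+1)^s)) := by
      have h := (aux_summable hs).mul_left (2/Real.pi)
      have : (fun n : ℕ => 2/Real.pi * (1/((n:ℝ)+1)^s)) =
          (fun n : ℕ => 2/(Real.pi * ((n:ℝ)+1)^s)) := by
        funext n; rw [div_mul_div_comm, mul_one]
      rwa [this] at h
    have hIsum : Summable I :=
      Summable.of_norm_bounded hGsum (fun n => by rw [Real.norm_eq_abs]; exact hIb n)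
    have hIntR : ∫ x in a..b, R α β x = ∑' n, I n := aux_interchange α β a b hα hab.le
    have hI0 : I 0 = ∫ x in a..b, Real.sin (Real.pi * x) := by
      simp [hI_def, Real.one_rpow]
    have hsplit : ∫ x in a..b, (R α β x - Real.sin (Real.pi * x)) = ∑' n : ℕ, I (n+1) := by
      rw [intervalIntegral.integral_sub ((aux_cont α β hα).intervalIntegrable a b)
        (hsin.intervalIntegrable a b),
        hIntR, ← hI0, Summable.tsum_eq_zero_add hIsum]
      ring
    rw [hsplit]
    have hGsum' : Summable (fun n : ℕ => 2/(Real.pi * ((n:ℝ)+2)^s)) := by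
      have h := (summable_nat_add_iff (f := fun n : ℕ => 2/(Real.pi * ((n:ℝ)+1)^s)) 1).mpr hGsum
      have : (fun n : ℕ => 2/(Real.pi * (((n+1:ℕ):ℝ)+1)^s)) =
          (fun n : ℕ => 2/(Real.pi * ((n:ℝ)+2)^s)) := by
        funext n; push_cast; ring_nf
      rwa [this] at h
    have hIb' : ∀ n : ℕ, |I (n+1)| ≤ 2/(Real.pi * ((n:ℝ)+2)^s) := by
      intro n
      have h := hIb (n+1)
      have : (((n+1:ℕ)):ℝ) + 1 = (n:ℝ) + 2 := by push_cast; ring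
      rwa [this] at h
    have hIsumnorm : Summable (fun n : ℕ => ‖I (n+1)‖) :=
      Summable.of_nonneg_of_le (fun n => norm_nonneg _)
        (fun n => by rw [Real.norm_eq_abs]; exact hIb' n) hGsum'
    calc |∑' n : ℕ, I (n+1)| ≤ ∑' n : ℕ, ‖I (n+1)‖ := norm_tsum_le_tsum_norm hIsumnorm
    _ ≤ ∑' n : ℕ, 2/(Real.pi * ((n:ℝ)+2)^s) := by
        apply Summable.tsum_le_tsum (fun n => by rw [Real.norm_eq_abs]; exact hIb' n) hIsumnorm hGsum'
    _ = (2 / Real.pi) * ((riemannZeta s).re - 1) := by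
        rw [aux_zeta_re s hs, ← tsum_mul_left]
        apply tsum_congr; intro n
        rw [div_mul_div_comm, mul_one]
  refine ⟨part1, ?_⟩
  -- Part 2
  have hsub : ∀ β : ℝ, (1 / (b - a)) * ∫ x in a..b, R α β x =
      (1 / (b - a)) * (∫ x in a..b, (R α β x - Real.sin (Real.pi * x))) +
      (1 / (b - a)) * ∫ x in a..b, Real.sin (Real.pi * x) := by
    intro β
    rw [intervalIntegral.integral_sub ((aux_cont α β hα).intervalIntegrable a b)
      (hsin.intervalIntegrable a b)]
    ring
  have hC1 : Summable (fun n : ℕ => 1/((n:ℝ)+2)^(α+1)) := by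
    have h := (summable_nat_add_iff (f := fun n : ℕ => 1/(n:ℝ)^(α+1)) 2).mpr
      (Real.summable_one_div_nat_rpow.mpr (by linarith))
    simpa using h
  set C : ℝ := ∑' n : ℕ, 1/((n:ℝ)+2)^(α+1) with hC_def
  have hzeta_bound : ∀ β : ℝ, 1 ≤ β →
      (riemannZeta (α + β)).re - 1 ≤ C * (2:ℝ)^(1-β) := by
    intro β hβ1
    have hs : 1 < α + β := by linarith
    rw [← Complex.ofReal_add, aux_zeta_re (α+β) hs]
    have hterm : ∀ n : ℕ, 1/((n:ℝ)+2)^(α+β) ≤ (1/((n:ℝ)+2)^(α+1)) * (2:ℝ)^(1-β) := by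
      intro n
      have hn2 : (0:ℝ) < (n:ℝ)+2 := by positivity
      have h1 : ((n:ℝ)+2)^(α+β) = ((n:ℝ)+2)^(α+1) * ((n:ℝ)+2)^(β-1) := by
        rw [← Real.rpow_add hn2]; ring_nf
      have h2 : (2:ℝ)^(β-1) ≤ ((n:ℝ)+2)^(β-1) :=
        Real.rpow_le_rpow (by norm_num) (by norm_num) (by linarith)
      have h3 : (2:ℝ)^(1-β) = ((2:ℝ)^(β-1))⁻¹ := by
        rw [show (1-β) = -(β-1) by ring, Real.rpow_neg (by norm_num)]
      rw [h1, h3, ← one_div ((2:ℝ)^(β-1)), div_mul_div_comm, mul_one]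
      apply one_div_le_one_div_of_le (by positivity)
      gcongr
    have hsumL : Summable (fun n : ℕ => 1/((n:ℝ)+2)^(α+β)) := by
      have h := (summable_nat_add_iff (f := fun n : ℕ => 1/(n:ℝ)^(α+β)) 2).mpr
        (Real.summable_one_div_nat_rpow.mpr hs)
      simpa using h
    calc (∑' n : ℕ, 1/((n:ℝ)+2)^(α+β)) ≤ ∑' n : ℕ, (1/((n:ℝ)+2)^(α+1)) * (2:ℝ)^(1-β) :=
          Summable.tsum_le_tsum hterm hsumL (hC1.mul_right _)
    _ = C * (2:ℝ)^(1-β) := by rw [tsum_mul_right]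
  have hzeta_nonneg : ∀ β : ℝ, 1 ≤ β → 0 ≤ (riemannZeta (α + β)).re - 1 := by
    intro β hβ1
    rw [← Complex.ofReal_add, aux_zeta_re (α+β) (by linarith)]
    exact tsum_nonneg (fun n => by positivity)
  have hdiff0 : Tendsto (fun β : ℝ =>
      (1 / (b - a)) * (∫ x in a..b, (R α β x - Real.sin (Real.pi * x)))) atTop (𝓝 0) := by
    have hba : (0:ℝ) < 1/(b-a) := one_div_pos.mpr (by linarith)
    apply squeeze_zero_norm' (a := fun β : ℝ => (1/(b-a)) * ((2/Real.pi) * (C * (2:ℝ)^(1-β))))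
    · filter_upwards [eventually_ge_atTop (1:ℝ)] with β hβ1
      rw [norm_mul, Real.norm_eq_abs, Real.norm_eq_abs,
        abs_of_pos hba]
      apply mul_le_mul_of_nonneg_left _ hba.le
      calc |∫ x in a..b, (R α β x - Real.sin (Real.pi * x))|
          ≤ (2 / Real.pi) * ((riemannZeta (α + β)).re - 1) := part1 β (by linarith)
      _ ≤ (2 / Real.pi) * (C * (2:ℝ)^(1-β)) := by
          apply mul_le_mul_of_nonneg_left (hzeta_bound β hβ1) (by positivity)
    · have h2 : Tendsto (fun β : ℝ => (2:ℝ)^(1-β)) atTop (𝓝 0) := by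
        have hbase := tendsto_rpow_atBot_of_base_gt_one 2 one_lt_two
        have hlin : Tendsto (fun β : ℝ => 1 - β) atTop atBot := by
          simp only [sub_eq_add_neg]
          exact tendsto_atBot_add_const_left atTop 1 tendsto_neg_atTop_atBot
        exact hbase.comp hlin
      have := (h2.const_mul ((1/(b-a)) * (2/Real.pi) * C))
      rw [mul_zero] at this
      convert this using 2 with β
      ring
  have := hdiff0.add (tendsto_const_nhds
    (x := (1 / (b - a)) * ∫ x in a..b, Real.sin (Real.pi * x)) (f := atTop))
  rw [zero_add] at this
  apply this.congr
  intro β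
  rw [hsub β]
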